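/- For every n ≥ 3, any local identifying code C in the binary hypercube F_2^n satisfies |C| ≥ 3·2^n/(3n−2). -/

import Mathlib

open SimpleGraph

/-- The closed neighbourhood of a vertex. -/
def cnbr {V : Type*} (G : SimpleGraph V) (u : V) : Set V := insert u (G.neighborSet u)

/-- The `I`-set of a vertex with respect to a code `C`. -/
def iset {V : Type*} (G : SimpleGraph V) (C : Set V) (u : V) : Set V := cnbr G u ∩ C

/-- `C` is a dominating set (covering code). -/
def IsDominating {V : Type*} (G : SimpleGraph V) (C : Set V) : Prop :=
  ∀ u, (iset G C u).Nonempty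

/-- `C` is a local identifying code. -/
def IsLocalID {V : Type*} (G : SimpleGraph V) (C : Set V) : Prop :=
  IsDominating G C ∧ ∀ u v, G.Adj u v → iset G C u ≠ iset G C v

/-- `C` is a local locating-dominating code. -/
def IsLocalLD {V : Type*} (G : SimpleGraph V) (C : Set V) : Prop :=
  IsDominating G C ∧ ∀ u v, G.Adj u v → u ∉ C → v ∉ C → iset G C u ≠ iset G C v

/-- `C` is an identifying code. -/
def IsID {V : Type*} (G : SimpleGraph V) (C : Set V) : Prop :=
  IsDominating G C ∧ ∀ u v : V, u ≠ v → iset G C u ≠ iset G C v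

/-- `C` is a locating-dominating code. -/
def IsLD {V : Type*} (G : SimpleGraph V) (C : Set V) : Prop :=
  IsDominating G C ∧ ∀ u v : V, u ≠ v → u ∉ C → v ∉ C → iset G C u ≠ iset G C v

/-- The share of a codeword `c`. -/
noncomputable def share {V : Type*} (G : SimpleGraph V) (C : Set V) (c : V) : ℝ :=
  ∑ᶠ u ∈ cnbr G c, (1 : ℝ) / (iset G C u).ncard

/-- The binary `n`-dimensional hypercube. -/
def cube (n : ℕ) : SimpleGraph (Fin n → ZMod 2) where
  Adj x y := hammingDist x y = 1
  symm := ⟨fun x y (h : hammingDist x y = 1) => show hammingDist y x = 1 by rwa [hammingDist_comm]⟩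
  loopless := ⟨fun x (h : hammingDist x x = 1) => by simp only [hammingDist_self] at h; exact absurd h (by norm_num)⟩

section Flip

variable {n : ℕ}

private lemma z2a : ∀ a : ZMod 2, a + 1 ≠ a := by decide
private lemma z2b : ∀ a b : ZMod 2, a ≠ b → b = a + 1 := by decide
private lemma z2c : ∀ a : ZMod 2, a + 1 + 1 = a := by decide

def flp (x : Fin n → ZMod 2) (i : Fin n) : Fin n → ZMod 2 :=
  fun j => if j = i then x j + 1 else x j

lemma flp_apply_same (x : Fin n → ZMod 2) (i : Fin n) : flp x i i = x i + 1 := by simp [flp]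

lemma flp_apply_ne (x : Fin n → ZMod 2) {i j : Fin n} (h : j ≠ i) : flp x i j = x j := by
  simp [flp, h]

lemma flp_ne (x : Fin n → ZMod 2) (i : Fin n) : flp x i ≠ x := fun h =>
  z2a (x i) (by simpa [flp_apply_same] using congrFun h i)

lemma flp_flp (x : Fin n → ZMod 2) (i : Fin n) : flp (flp x i) i = x := by
  funext j
  by_cases h : j = i
  · subst h; simp [flp, z2c]
  · simp [flp, h]

lemma flp_comm (x : Fin n → ZMod 2) (i j : Fin n) : flp (flp x i) j = flp (flp x j) i := by
  funext k
  simp only [flp]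
  split_ifs <;> simp_all

lemma flp_inj_right {x : Fin n → ZMod 2} {i j : Fin n} (h : flp x i = flp x j) : i = j := by
  by_contra hij
  have h1 := congrFun h i
  rw [flp_apply_same, flp_apply_ne x (Ne.symm ?_)] at h1
  · exact z2a (x i) h1
  · exact fun hh => hij hh.symm

lemma flp2_ne {x : Fin n → ZMod 2} {i j : Fin n} (h : i ≠ j) : flp (flp x i) j ≠ x := by
  intro hh
  have h1 := congrFun hh i
  rw [flp_apply_ne _ h, flp_apply_same] at h1
  exact z2a (x i) h1

lemma flp_eq_of_flp2_eq {x : Fin n → ZMod 2} {i j : Fin n} (h : flp (flp x i) j = x) : i = j := by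
  by_contra hij
  exact flp2_ne hij h

lemma cube_adj {x y : Fin n → ZMod 2} : (cube n).Adj x y ↔ ∃ i, y = flp x i := by
  show hammingDist x y = 1 ↔ _
  rw [hammingDist, Finset.card_eq_one]
  constructor
  · rintro ⟨i, hi⟩
    refine ⟨i, funext fun j => ?_⟩
    by_cases hj : j = i
    · subst hj
      have hmem : j ∈ ({j} : Finset (Fin n)) := Finset.mem_singleton_self j
      rw [← hi, Finset.mem_filter] at hmem
      rw [flp_apply_same]
      exact z2b _ _ hmem.2
    · have hmem : j ∉ ({i} : Finset (Fin n)) := by simp [hj]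
      rw [← hi, Finset.mem_filter] at hmem
      push_neg at hmem
      rw [flp_apply_ne _ hj]
      exact (hmem (Finset.mem_univ j)).symm
  · rintro ⟨i, rfl⟩
    refine ⟨i, ?_⟩
    ext j
    simp only [Finset.mem_filter, Finset.mem_univ, true_and, Finset.mem_singleton]
    by_cases hj : j = i
    · subst hj; simp [flp_apply_same, fun a => (z2a a).symm]
    · simp [flp_apply_ne _ hj, hj]

end Flip

section Nbr

variable {n : ℕ} {α : Type*}

lemma mem_cnbr {G : SimpleGraph α} {x y : α} : y ∈ cnbr G x ↔ y = x ∨ G.Adj x y := by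
  simp [cnbr, Set.mem_insert_iff, SimpleGraph.mem_neighborSet]

lemma mem_cnbr_comm {G : SimpleGraph α} {x y : α} : y ∈ cnbr G x ↔ x ∈ cnbr G y := by
  rw [mem_cnbr, mem_cnbr, G.adj_comm, eq_comm]

lemma mem_cnbr_cube {x y : Fin n → ZMod 2} :
    y ∈ cnbr (cube n) x ↔ y = x ∨ ∃ i, y = flp x i := by
  rw [mem_cnbr, cube_adj]

lemma self_mem_cnbr {G : SimpleGraph α} (x : α) : x ∈ cnbr G x := mem_cnbr.mpr (Or.inl rfl)

lemma flp_mem_cnbr (x : Fin n → ZMod 2) (i : Fin n) : flp x i ∈ cnbr (cube n) x :=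
  mem_cnbr_cube.mpr (Or.inr ⟨i, rfl⟩)

lemma mem_cnbr_flp (x : Fin n → ZMod 2) (i : Fin n) : x ∈ cnbr (cube n) (flp x i) :=
  mem_cnbr_cube.mpr (Or.inr ⟨i, (flp_flp x i).symm⟩)

lemma mem_iset {G : SimpleGraph α} {C : Set α} {u x : α} :
    x ∈ iset G C u ↔ x ∈ cnbr G u ∧ x ∈ C := Iff.rfl

lemma ncard_ge_two {s : Set α} [Finite α] {a b : α} (ha : a ∈ s) (hb : b ∈ s) (h : a ≠ b) :
    2 ≤ s.ncard :=
  (Set.one_lt_ncard (Set.toFinite s)).mpr ⟨a, ha, b, hb, h⟩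

lemma ncard_ge_three {s : Set α} [Finite α] {a b c : α} (ha : a ∈ s) (hb : b ∈ s) (hc : c ∈ s)
    (hab : a ≠ b) (hac : a ≠ c) (hbc : b ≠ c) : 3 ≤ s.ncard := by
  have hsub : ({a, b, c} : Set α) ⊆ s := by
    intro x hx
    rcases hx with rfl | rfl | rfl
    exacts [ha, hb, hc]
  have h3 : ({a, b, c} : Set α).ncard = 3 := by
    rw [Set.ncard_insert_of_notMem (by simp [hab, hac]), Set.ncard_pair hbc]
  calc 3 = ({a, b, c} : Set α).ncard := h3.symm
    _ ≤ s.ncard := Set.ncard_le_ncard hsub (Set.toFinite s)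

lemma share_eq (C : Set (Fin n → ZMod 2)) (c : Fin n → ZMod 2) :
    share (cube n) C c
      = 1 / ((iset (cube n) C c).ncard : ℝ)
        + ∑ i : Fin n, 1 / ((iset (cube n) C (flp c i)).ncard : ℝ) := by
  classical
  have hset : cnbr (cube n) c
      = ↑(insert c ((Finset.univ : Finset (Fin n)).image (flp c))) := by
    ext y
    simp only [mem_cnbr_cube, Finset.coe_insert, Set.mem_insert_iff, Finset.coe_image,
      Finset.coe_univ, Set.image_univ, Set.mem_range]
    constructor
    · rintro (rfl | ⟨i, rfl⟩)
      · exact Or.inl rfl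
      · exact Or.inr ⟨i, rfl⟩
    · rintro (rfl | ⟨i, rfl⟩)
      · exact Or.inl rfl
      · exact Or.inr ⟨i, rfl⟩
  rw [share, hset, finsum_mem_coe_finset, Finset.sum_insert, Finset.sum_image]
  · intro i _ j _ h
    exact flp_inj_right h
  · simp only [Finset.mem_image, Finset.mem_univ, true_and, not_exists]
    exact fun i => flp_ne c i

end Nbr

section Count

variable {n : ℕ}

lemma sum_share {C : Set (Fin n → ZMod 2)} (hdom : IsDominating (cube n) C) :
    ∑ c ∈ (Set.toFinite C).toFinset, share (cube n) C c = (2 : ℝ) ^ n := by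
  classical
  set sC := (Set.toFinite C).toFinset with hsC
  have hmem : ∀ c, c ∈ sC ↔ c ∈ C := fun c => Set.Finite.mem_toFinset _
  have hshare : ∀ c ∈ sC, share (cube n) C c
      = ∑ u : Fin n → ZMod 2,
          (if c ∈ iset (cube n) C u then (1 : ℝ) / (iset (cube n) C u).ncard else 0) := by
    intro c hc
    have hcC : c ∈ C := (hmem c).1 hc
    have h1 : cnbr (cube n) c
        = ↑(Finset.univ.filter (fun u => c ∈ iset (cube n) C u)) := by
      ext u
      simp only [Finset.coe_filter, Finset.mem_univ, true_and, Set.mem_setOf_eq, mem_iset]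
      constructor
      · intro h; exact ⟨mem_cnbr_comm.mp h, hcC⟩
      · intro h; exact mem_cnbr_comm.mp h.1
    rw [share, h1, finsum_mem_coe_finset, Finset.sum_filter]
  rw [Finset.sum_congr rfl hshare, Finset.sum_comm]
  have hone : ∀ u : Fin n → ZMod 2,
      (∑ c ∈ sC, if c ∈ iset (cube n) C u then (1 : ℝ) / (iset (cube n) C u).ncard else 0) = 1 := by
    intro u
    rw [← Finset.sum_filter]
    have hfil : sC.filter (fun c => c ∈ iset (cube n) C u)
        = (Set.toFinite (iset (cube n) C u)).toFinset := by
      ext x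
      simp only [Finset.mem_filter, hmem, Set.Finite.mem_toFinset]
      exact ⟨fun h => h.2, fun h => ⟨h.2, h⟩⟩
    rw [hfil, Finset.sum_const, Set.Finite.card_toFinset]
    have hcard : (Set.toFinite (iset (cube n) C u)).toFinset.card = (iset (cube n) C u).ncard :=
      (Set.ncard_eq_toFinset_card _ _).symm
    have hpos : 0 < (iset (cube n) C u).ncard := (Set.ncard_pos (Set.toFinite _)).mpr (hdom u)
    rw [Set.Finite.card_toFinset] at hcard
    rw [hcard, nsmul_eq_mul]
    field_simp
  rw [Finset.sum_congr rfl (fun u _ => hone u), Finset.sum_const, Finset.card_univ]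
  have hcV : Fintype.card (Fin n → ZMod 2) = 2 ^ n := by
    rw [Fintype.card_fun]
    simp
  rw [hcV, nsmul_eq_mul, mul_one]
  push_cast
  ring

end Count

section Core

variable {n : ℕ} {C : Set (Fin n → ZMod 2)} {c : Fin n → ZMod 2}

lemma eq_singleton_of_ncard_one {α : Type*} {s : Set α} {a : α} (ha : a ∈ s)
    (h : s.ncard = 1) : s = {a} := by
  obtain ⟨b, rfl⟩ := Set.ncard_eq_one.mp h
  rw [Set.mem_singleton_iff] at ha
  rw [ha]

lemma nat_inv_le_one {m : ℕ} (h : 1 ≤ m) : 1 / (m : ℝ) ≤ 1 :=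
  (div_le_one (by exact_mod_cast h)).mpr (by exact_mod_cast h)

lemma inv_le_half {m : ℕ} (h : 2 ≤ m) : 1 / (m : ℝ) ≤ 1 / 2 :=
  one_div_le_one_div_of_le (by norm_num) (by exact_mod_cast h)

lemma inv_le_third {m : ℕ} (h : 3 ≤ m) : 1 / (m : ℝ) ≤ 1 / 3 :=
  one_div_le_one_div_of_le (by norm_num) (by exact_mod_cast h)

lemma notC_of_rest {i : Fin n} (h : iset (cube n) C (flp c i) = {c}) : flp c i ∉ C := by
  intro hmem
  have hx : flp c i ∈ iset (cube n) C (flp c i) := ⟨self_mem_cnbr _, hmem⟩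
  rw [h, Set.mem_singleton_iff] at hx
  exact flp_ne c i hx

lemma notC2_of_rest {i j : Fin n} (hj : j ≠ i) (h : iset (cube n) C (flp c i) = {c}) :
    flp (flp c i) j ∉ C := by
  intro hmem
  have hx : flp (flp c i) j ∈ iset (cube n) C (flp c i) := ⟨flp_mem_cnbr _ _, hmem⟩
  rw [h, Set.mem_singleton_iff] at hx
  exact hj (flp_eq_of_flp2_eq hx).symm

lemma S5asym (hC : IsLocalID (cube n) C) (hc : c ∈ C) {k l : Fin n} (hkl : k ≠ l)
    (hrest : ∀ i, i ≠ k → i ≠ l → iset (cube n) C (flp c i) = {c})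
    (hkC : flp c k ∈ C) (hlC : flp c l ∉ C) :
    3 ≤ (iset (cube n) C (flp c k)).ncard := by
  set z := flp (flp c k) l with hz
  have hIc : iset (cube n) C c = {c, flp c k} := by
    apply Set.Subset.antisymm
    · rintro x ⟨hx1, hx2⟩
      rcases mem_cnbr_cube.mp hx1 with rfl | ⟨i, rfl⟩
      · exact Or.inl rfl
      · by_cases hik : i = k
        · subst hik; exact Or.inr rfl
        · by_cases hil : i = l
          · subst hil; exact absurd hx2 hlC
          · exact absurd hx2 (notC_of_rest (hrest i hik hil))
    · rintro x hx
      rcases hx with h | h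
      · rw [h]; exact ⟨self_mem_cnbr _, hc⟩
      · rw [Set.mem_singleton_iff] at h; rw [h]; exact ⟨flp_mem_cnbr _ _, hkC⟩
  have hIk_sub : iset (cube n) C (flp c k) ⊆ {c, flp c k, z} := by
    rintro x ⟨hx1, hx2⟩
    rcases mem_cnbr_cube.mp hx1 with rfl | ⟨j, rfl⟩
    · exact Or.inr (Or.inl rfl)
    · by_cases hjk : j = k
      · subst hjk; rw [flp_flp]; exact Or.inl rfl
      · by_cases hjl : j = l
        · subst hjl; exact Or.inr (Or.inr rfl)
        · rw [flp_comm c k j] at hx2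
          exact absurd hx2 (notC2_of_rest (Ne.symm hjk) (hrest j hjk hjl))
  have hzC : z ∈ C := by
    by_contra hzC
    have hIk : iset (cube n) C (flp c k) = {c, flp c k} := by
      apply Set.Subset.antisymm
      · intro x hx
        rcases hIk_sub hx with h | h | h
        · exact Or.inl h
        · exact Or.inr h
        · rw [h] at hx; exact absurd hx.2 hzC
      · rintro x hx
        rcases hx with h | h
        · rw [h]; exact ⟨mem_cnbr_flp c k, hc⟩
        · rw [Set.mem_singleton_iff] at h; rw [h]; exact ⟨self_mem_cnbr _, hkC⟩
    exact hC.2 c (flp c k) (cube_adj.mpr ⟨k, rfl⟩) (hIc.trans hIk.symm)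
  exact ncard_ge_three ⟨mem_cnbr_flp c k, hc⟩ ⟨self_mem_cnbr _, hkC⟩ ⟨flp_mem_cnbr _ _, hzC⟩
    (flp_ne c k).symm (flp2_ne hkl).symm (flp_ne (flp c k) l).symm

lemma S5core (hC : IsLocalID (cube n) C) (hc : c ∈ C) {k l : Fin n} (hkl : k ≠ l)
    (hrest : ∀ i, i ≠ k → i ≠ l → iset (cube n) C (flp c i) = {c})
    (htc : 2 ≤ (iset (cube n) C c).ncard)
    (hk1 : 2 ≤ (iset (cube n) C (flp c k)).ncard)
    (hl1 : 2 ≤ (iset (cube n) C (flp c l)).ncard) :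
    1 / ((iset (cube n) C c).ncard : ℝ) + 1 / ((iset (cube n) C (flp c k)).ncard : ℝ)
      + 1 / ((iset (cube n) C (flp c l)).ncard : ℝ) ≤ 4 / 3 := by
  by_cases hkC : flp c k ∈ C
  · by_cases hlC : flp c l ∈ C
    · have h3 : 3 ≤ (iset (cube n) C c).ncard :=
        ncard_ge_three ⟨self_mem_cnbr _, hc⟩ ⟨flp_mem_cnbr _ _, hkC⟩ ⟨flp_mem_cnbr _ _, hlC⟩
          (flp_ne c k).symm (flp_ne c l).symm (fun h => hkl (flp_inj_right h))
      have b1 := inv_le_third h3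
      have b2 := inv_le_half hk1
      have b3 := inv_le_half hl1
      linarith
    · have h3 := S5asym hC hc hkl hrest hkC hlC
      have b1 := inv_le_half htc
      have b2 := inv_le_third h3
      have b3 := inv_le_half hl1
      linarith
  · by_cases hlC : flp c l ∈ C
    · have h3 := S5asym hC hc hkl.symm (fun i hil hik => hrest i hik hil) hlC hkC
      have b1 := inv_le_half htc
      have b2 := inv_le_half hk1
      have b3 := inv_le_third h3
      linarith
    · exfalso
      have hsub : iset (cube n) C c ⊆ {c} := by
        rintro x ⟨hx1, hx2⟩
        rcases mem_cnbr_cube.mp hx1 with rfl | ⟨i, rfl⟩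
        · exact Set.mem_singleton _
        · by_cases hik : i = k
          · subst hik; exact absurd hx2 hkC
          · by_cases hil : i = l
            · subst hil; exact absurd hx2 hlC
            · exact absurd hx2 (notC_of_rest (hrest i hik hil))
      have := Set.ncard_le_ncard hsub (Set.toFinite _)
      rw [Set.ncard_singleton] at this
      omega

lemma exactly_one (hc : c ∈ C) {i j1 j2 : Fin n}
    (h1 : j1 ≠ i) (h2 : j2 ≠ i) (h12 : j1 ≠ j2)
    (hcover : ∀ j : Fin n, j = i ∨ j = j1 ∨ j = j2)
    (huiC : flp c i ∉ C)
    (hT : (iset (cube n) C (flp c i)).ncard = 2) :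
    (flp (flp c i) j1 ∈ C ↔ flp (flp c i) j2 ∉ C) := by
  have hcm : c ∈ iset (cube n) C (flp c i) := ⟨mem_cnbr_flp c i, hc⟩
  have hcz1 : c ≠ flp (flp c i) j1 := fun h => flp2_ne (Ne.symm h1) h.symm
  have hcz2 : c ≠ flp (flp c i) j2 := fun h => flp2_ne (Ne.symm h2) h.symm
  have hz12 : flp (flp c i) j1 ≠ flp (flp c i) j2 := fun h => h12 (flp_inj_right h)
  have hsub : iset (cube n) C (flp c i) ⊆ {c, flp (flp c i) j1, flp (flp c i) j2} := by
    rintro x ⟨hx1, hx2⟩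
    rcases mem_cnbr_cube.mp hx1 with rfl | ⟨j, rfl⟩
    · exact absurd hx2 huiC
    · rcases hcover j with h | h | h
      · rw [h]; exact Or.inl (flp_flp c i)
      · rw [h]; exact Or.inr (Or.inl rfl)
      · rw [h]; exact Or.inr (Or.inr rfl)
  constructor
  · intro hz1C hz2C
    have h3 : 3 ≤ (iset (cube n) C (flp c i)).ncard :=
      ncard_ge_three hcm ⟨flp_mem_cnbr _ _, hz1C⟩ ⟨flp_mem_cnbr _ _, hz2C⟩ hcz1 hcz2 hz12
    omega
  · intro hz2C
    by_contra hz1C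
    have hsub2 : iset (cube n) C (flp c i) ⊆ {c} := by
      intro x hx
      rcases hsub hx with h | h | h
      · exact h
      · rw [h] at hx; exact absurd hx.2 hz1C
      · rw [h] at hx; exact absurd hx.2 hz2C
    have := Set.ncard_le_ncard hsub2 (Set.toFinite _)
    rw [Set.ncard_singleton] at this
    omega

end Core

section Main

variable {n : ℕ}

lemma share_bound {C : Set (Fin n → ZMod 2)} (hn : 3 ≤ n) (hC : IsLocalID (cube n) C)
    {c : Fin n → ZMod 2} (hc : c ∈ C) :
    share (cube n) C c ≤ (3 * (n : ℝ) - 2) / 3 := by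
  classical
  have hdom := hC.1
  have hT1 : ∀ u, 1 ≤ (iset (cube n) C u).ncard :=
    fun u => (Set.ncard_pos (Set.toFinite _)).mpr (hdom u)
  have hcmem : ∀ i, c ∈ iset (cube n) C (flp c i) := fun i => ⟨mem_cnbr_flp c i, hc⟩
  have hccmem : c ∈ iset (cube n) C c := ⟨self_mem_cnbr _, hc⟩
  have hsing : ∀ i, (iset (cube n) C (flp c i)).ncard = 1 → iset (cube n) C (flp c i) = {c} :=
    fun i h => eq_singleton_of_ncard_one (hcmem i) h
  have hAdj : ∀ i, (cube n).Adj c (flp c i) := fun i => cube_adj.mpr ⟨i, rfl⟩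
  have hK3 : (∃ i, (iset (cube n) C (flp c i)).ncard = 1) → 2 ≤ (iset (cube n) C c).ncard := by
    rintro ⟨i, hi⟩
    have h1 := hsing i hi
    have hne := hC.2 c (flp c i) (hAdj i)
    rw [h1] at hne
    by_contra hlt
    push_neg at hlt
    have h2 : (iset (cube n) C c).ncard = 1 := by have := hT1 c; omega
    exact hne (eq_singleton_of_ncard_one hccmem h2)
  rw [share_eq]
  have hn3 : (3 : ℝ) ≤ (n : ℝ) := by exact_mod_cast hn
  by_cases hA : ∃ i, (iset (cube n) C (flp c i)).ncard = 1
  · have htc2 : 2 ≤ (iset (cube n) C c).ncard := hK3 hA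
    set S : Finset (Fin n) :=
      Finset.univ.filter (fun i => (iset (cube n) C (flp c i)).ncard = 1) with hSdef
    set S' : Finset (Fin n) :=
      Finset.univ.filter (fun i => ¬ (iset (cube n) C (flp c i)).ncard = 1) with hS'def
    have hsplit : ∑ i : Fin n, 1 / ((iset (cube n) C (flp c i)).ncard : ℝ)
        = ∑ i ∈ S, 1 / ((iset (cube n) C (flp c i)).ncard : ℝ)
          + ∑ i ∈ S', 1 / ((iset (cube n) C (flp c i)).ncard : ℝ) :=
      (Finset.sum_filter_add_sum_filter_not Finset.univ _ _).symm
    have hcards : S.card + S'.card = n := by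
      rw [hSdef, hS'def, Finset.card_filter_add_card_filter_not, Finset.card_univ,
        Fintype.card_fin]
    have hSsum : ∑ i ∈ S, 1 / ((iset (cube n) C (flp c i)).ncard : ℝ) = S.card := by
      have hone : ∀ i ∈ S, 1 / ((iset (cube n) C (flp c i)).ncard : ℝ) = 1 := by
        intro i hi
        rw [(Finset.mem_filter.mp hi).2]
        norm_num
      rw [Finset.sum_congr rfl hone, Finset.sum_const, nsmul_eq_mul, mul_one]
    have hS'sum : ∑ i ∈ S', 1 / ((iset (cube n) C (flp c i)).ncard : ℝ)
        ≤ (S'.card : ℝ) * (1 / 2) := by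
      have hb : ∀ i ∈ S', 1 / ((iset (cube n) C (flp c i)).ncard : ℝ) ≤ 1 / 2 := by
        intro i hi
        have h1 := (Finset.mem_filter.mp hi).2
        exact inv_le_half (by have := hT1 (flp c i); omega)
      calc ∑ i ∈ S', 1 / ((iset (cube n) C (flp c i)).ncard : ℝ)
          ≤ S'.card • ((1 : ℝ) / 2) := Finset.sum_le_card_nsmul _ _ _ hb
        _ = (S'.card : ℝ) * (1 / 2) := by rw [nsmul_eq_mul]
    by_cases hcase1 : S.card + 3 ≤ n
    · have b1 : 1 / ((iset (cube n) C c).ncard : ℝ) ≤ 1 / 2 := inv_le_half htc2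
      rw [hsplit, hSsum]
      have hcast : (S.card : ℝ) + 3 ≤ n := by exact_mod_cast hcase1
      have hc2 : (S.card : ℝ) + (S'.card : ℝ) = n := by exact_mod_cast hcards
      linarith
    · by_cases hcase2 : S.card + 2 = n
      · have hS'2 : S'.card = 2 := by omega
        obtain ⟨k, l, hkl, hklS⟩ := Finset.card_eq_two.mp hS'2
        have hkS' : k ∈ S' := by rw [hklS]; exact Finset.mem_insert_self _ _
        have hlS' : l ∈ S' := by rw [hklS]; simp
        have hk1 : 2 ≤ (iset (cube n) C (flp c k)).ncard := by
          have h1 := (Finset.mem_filter.mp hkS').2; have := hT1 (flp c k); omega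
        have hl1 : 2 ≤ (iset (cube n) C (flp c l)).ncard := by
          have h1 := (Finset.mem_filter.mp hlS').2; have := hT1 (flp c l); omega
        have hrest : ∀ i, i ≠ k → i ≠ l → iset (cube n) C (flp c i) = {c} := by
          intro i hik hil
          apply hsing
          by_contra hne
          have hiS' : i ∈ S' := Finset.mem_filter.mpr ⟨Finset.mem_univ _, hne⟩
          rw [hklS] at hiS'
          simp only [Finset.mem_insert, Finset.mem_singleton] at hiS'
          tauto
        have hkey := S5core hC hc hkl hrest htc2 hk1 hl1
        have hS'pair : ∑ i ∈ S', 1 / ((iset (cube n) C (flp c i)).ncard : ℝ)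
            = 1 / ((iset (cube n) C (flp c k)).ncard : ℝ)
              + 1 / ((iset (cube n) C (flp c l)).ncard : ℝ) := by
          rw [hklS, Finset.sum_pair hkl]
        rw [hsplit, hSsum, hS'pair]
        have hc2 : (S.card : ℝ) + 2 = n := by exact_mod_cast hcase2
        linarith
      · exfalso
        have hS'le1 : S'.card ≤ 1 := by omega
        obtain ⟨k, hk⟩ : ∃ k : Fin n, ∀ i, i ≠ k → (iset (cube n) C (flp c i)).ncard = 1 := by
          by_cases hS'e : S'.Nonempty
          · obtain ⟨k, hkS'⟩ := hS'e
            refine ⟨k, fun i hik => ?_⟩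
            by_contra hne
            have hiS' : i ∈ S' := Finset.mem_filter.mpr ⟨Finset.mem_univ _, hne⟩
            exact hik (Finset.card_le_one.mp hS'le1 i hiS' k hkS')
          · refine ⟨⟨0, by omega⟩, fun i _ => ?_⟩
            by_contra hne
            exact hS'e ⟨i, Finset.mem_filter.mpr ⟨Finset.mem_univ _, hne⟩⟩
        have hrest : ∀ i, i ≠ k → iset (cube n) C (flp c i) = {c} := fun i h => hsing i (hk i h)
        have hIc : iset (cube n) C c ⊆ {c, flp c k} := by
          rintro x ⟨hx1, hx2⟩
          rcases mem_cnbr_cube.mp hx1 with h | ⟨i, h⟩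
          · rw [h]; exact Or.inl rfl
          · by_cases hik : i = k
            · rw [h, hik]; exact Or.inr rfl
            · rw [h] at hx2; exact absurd hx2 (notC_of_rest (hrest i hik))
        have hukC : flp c k ∈ C := by
          by_contra hK
          have hsub : iset (cube n) C c ⊆ {c} := by
            intro x hx
            rcases hIc hx with h | h
            · exact h
            · rw [h] at hx; exact absurd hx.2 hK
          have := Set.ncard_le_ncard hsub (Set.toFinite _)
          rw [Set.ncard_singleton] at this
          omega
        have hIceq : iset (cube n) C c = {c, flp c k} := by
          apply Set.Subset.antisymm hIc
          rintro x hx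
          rcases hx with h | h
          · rw [h]; exact hccmem
          · rw [Set.mem_singleton_iff] at h; rw [h]; exact ⟨flp_mem_cnbr _ _, hukC⟩
        have hIkeq : iset (cube n) C (flp c k) = {c, flp c k} := by
          apply Set.Subset.antisymm
          · rintro x ⟨hx1, hx2⟩
            rcases mem_cnbr_cube.mp hx1 with h | ⟨j, h⟩
            · rw [h]; exact Or.inr rfl
            · by_cases hjk : j = k
              · rw [h, hjk, flp_flp]; exact Or.inl rfl
              · rw [h, flp_comm c k j] at hx2
                exact absurd hx2 (notC2_of_rest (Ne.symm hjk) (hrest j hjk))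
          · rintro x hx
            rcases hx with h | h
            · rw [h]; exact ⟨mem_cnbr_flp c k, hc⟩
            · rw [Set.mem_singleton_iff] at h; rw [h]; exact ⟨self_mem_cnbr _, hukC⟩
        exact hC.2 c (flp c k) (hAdj k) (hIceq.trans hIkeq.symm)
  · push_neg at hA
    have hA2 : ∀ i, 2 ≤ (iset (cube n) C (flp c i)).ncard := fun i => by
      have h1 := hT1 (flp c i); have h2 := hA i; omega
    have hsum : ∑ i : Fin n, 1 / ((iset (cube n) C (flp c i)).ncard : ℝ) ≤ (n : ℝ) * (1 / 2) := by
      calc ∑ i : Fin n, 1 / ((iset (cube n) C (flp c i)).ncard : ℝ)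
          ≤ Finset.univ.card • ((1 : ℝ) / 2) :=
            Finset.sum_le_card_nsmul _ _ _ (fun i _ => inv_le_half (hA2 i))
        _ = (n : ℝ) * (1 / 2) := by
            rw [Finset.card_univ, Fintype.card_fin, nsmul_eq_mul]
    by_cases htc : 2 ≤ (iset (cube n) C c).ncard
    · have b1 : 1 / ((iset (cube n) C c).ncard : ℝ) ≤ 1 / 2 := inv_le_half htc
      linarith
    · have htc1 : (iset (cube n) C c).ncard = 1 := by have := hT1 c; omega
      have hIc : iset (cube n) C c = {c} := eq_singleton_of_ncard_one hccmem htc1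
      have hnotC : ∀ i, flp c i ∉ C := by
        intro i hmem
        have hx : flp c i ∈ iset (cube n) C c := ⟨flp_mem_cnbr _ _, hmem⟩
        rw [hIc, Set.mem_singleton_iff] at hx
        exact flp_ne c i hx
      have b0 : 1 / ((iset (cube n) C c).ncard : ℝ) ≤ 1 := nat_inv_le_one (hT1 c)
      rcases Nat.lt_or_ge n 4 with h4 | h4
      · have h3 : n = 3 := by omega
        subst h3
        have hone : ¬ (∀ i, (iset (cube 3) C (flp c i)).ncard = 2) := by
          intro hall
          have e0 := exactly_one hc (show (1 : Fin 3) ≠ 0 by decide) (show (2 : Fin 3) ≠ 0 by decide)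
            (show (1 : Fin 3) ≠ 2 by decide) (by decide) (hnotC 0) (hall 0)
          have e1 := exactly_one hc (show (0 : Fin 3) ≠ 1 by decide) (show (2 : Fin 3) ≠ 1 by decide)
            (show (0 : Fin 3) ≠ 2 by decide) (by decide) (hnotC 1) (hall 1)
          have e2 := exactly_one hc (show (0 : Fin 3) ≠ 2 by decide) (show (1 : Fin 3) ≠ 2 by decide)
            (show (0 : Fin 3) ≠ 1 by decide) (by decide) (hnotC 2) (hall 2)
          rw [flp_comm c 1 0] at e1
          rw [flp_comm c 2 0, flp_comm c 2 1] at e2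
          tauto
        push_neg at hone
        obtain ⟨i0, hi0⟩ := hone
        have hi03 : 3 ≤ (iset (cube 3) C (flp c i0)).ncard := by
          have := hA2 i0; omega
        have hsum3 : ∑ i : Fin 3, 1 / ((iset (cube 3) C (flp c i)).ncard : ℝ)
            = 1 / ((iset (cube 3) C (flp c i0)).ncard : ℝ)
              + ∑ i ∈ Finset.univ.erase i0, 1 / ((iset (cube 3) C (flp c i)).ncard : ℝ) := by
          have h := Finset.sum_erase_add Finset.univ
            (fun i => 1 / ((iset (cube 3) C (flp c i)).ncard : ℝ)) (Finset.mem_univ i0)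
          rw [← h]; ring
        have herase : ∑ i ∈ Finset.univ.erase i0, 1 / ((iset (cube 3) C (flp c i)).ncard : ℝ)
            ≤ 2 * (1 / 2) := by
          calc ∑ i ∈ Finset.univ.erase i0, 1 / ((iset (cube 3) C (flp c i)).ncard : ℝ)
              ≤ (Finset.univ.erase i0).card • ((1 : ℝ) / 2) :=
                Finset.sum_le_card_nsmul _ _ _ (fun i _ => inv_le_half (hA2 i))
            _ ≤ 2 * (1 / 2) := by
                rw [Finset.card_erase_of_mem (Finset.mem_univ _), Finset.card_univ,
                  Fintype.card_fin, nsmul_eq_mul]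
                norm_num
        have bi0 : 1 / ((iset (cube 3) C (flp c i0)).ncard : ℝ) ≤ 1 / 3 := inv_le_third hi03
        rw [hsum3]
        push_cast
        linarith
      · have h4' : (4 : ℝ) ≤ (n : ℝ) := by exact_mod_cast h4
        linarith

end Main

/-- For `n ≥ 3`, every local identifying code in `F_2^n` has size at least
`3·2^n/(3n−2)`. -/
theorem stmt7 (n : ℕ) (hn : 3 ≤ n) (C : Set (Fin n → ZMod 2))
    (hC : IsLocalID (cube n) C) :
    (3 * 2 ^ n : ℝ) / (3 * n - 2) ≤ (C.ncard : ℝ) := by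
  classical
  have hsum := sum_share hC.1
  have hb : ∀ c ∈ (Set.toFinite C).toFinset, share (cube n) C c ≤ (3 * (n : ℝ) - 2) / 3 :=
    fun c hcmem => share_bound hn hC ((Set.Finite.mem_toFinset _).mp hcmem)
  have hle : (2 : ℝ) ^ n ≤ ((Set.toFinite C).toFinset.card : ℝ) * ((3 * (n : ℝ) - 2) / 3) := by
    calc (2 : ℝ) ^ n = ∑ c ∈ (Set.toFinite C).toFinset, share (cube n) C c := hsum.symm
      _ ≤ (Set.toFinite C).toFinset.card • ((3 * (n : ℝ) - 2) / 3) :=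
          Finset.sum_le_card_nsmul _ _ _ hb
      _ = _ := by rw [nsmul_eq_mul]
  have hcard : ((Set.toFinite C).toFinset.card : ℝ) = (C.ncard : ℝ) := by
    rw [Set.ncard_eq_toFinset_card C (Set.toFinite C)]
  rw [hcard] at hle
  have hn3 : (3 : ℝ) ≤ (n : ℝ) := by exact_mod_cast hn
  have hpos : (0 : ℝ) < 3 * (n : ℝ) - 2 := by linarith
  rw [div_le_iff₀ hpos]
  nlinarith [hle]
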